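/- arXiv:2501.10951 — 2 statements merged into one kernel-verified Lean document; each statement's English description precedes it below -/
import Mathlib

section
/- For 0 < p < 1/2 and q = 1 - p, the mean of the distribution P(S = n) = q·(pq)^n·C_n is ∑_{n≥0} n·q·(pq)^n·C_n = p/(q - p), where C_n is the n-th Catalan number. -/
open Finset

lemma myCentralBinom_le_four_pow (n : ℕ) : Nat.centralBinom n ≤ 4 ^ n := by
  have h : Nat.centralBinom n ≤ ∑ i ∈ range (2*n+1), (2*n).choose i :=
    Finset.single_le_sum (f := fun i => (2*n).choose i) (fun i _ => Nat.zero_le _)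
      (by simp [Finset.mem_range]; omega)
  rw [Nat.sum_range_choose] at h
  calc Nat.centralBinom n ≤ 2 ^ (2*n) := h
  _ = 4 ^ n := by rw [pow_mul]; norm_num

lemma myRingChoose_succ (r : ℝ) (k : ℕ) :
    ((k:ℝ)+1) * Ring.choose r (k+1) = Ring.choose r k * (r - k) := by
  have h1 := Ring.descPochhammer_eq_factorial_smul_choose (R := ℝ) r (k+1)
  have h2 := Ring.descPochhammer_eq_factorial_smul_choose (R := ℝ) r k
  rw [descPochhammer_succ_right, Polynomial.smeval_mul, Polynomial.smeval_sub,
    Polynomial.smeval_X, Polynomial.smeval_natCast, h2] at h1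
  have hfac : ((k+1).factorial : ℝ) = ((k:ℝ)+1) * (k.factorial : ℝ) := by
    rw [Nat.factorial_succ]; push_cast; ring
  have hkf : (k.factorial : ℝ) ≠ 0 := by positivity
  apply mul_left_cancel₀ hkf
  simp only [nsmul_eq_mul, smul_eq_mul] at h1
  rw [hfac] at h1
  linear_combination -h1

lemma myChoose_neg_half (k : ℕ) :
    Ring.choose (-(1/2) : ℝ) k = (-(1/4))^k * Nat.centralBinom k := by
  induction k with
  | zero => simp [Ring.choose_zero_right]
  | succ k ih =>
    have h := myRingChoose_succ (-(1/2) : ℝ) k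
    have hk1 : ((k:ℝ)+1) ≠ 0 := by positivity
    have hcbR : ((k:ℝ)+1) * (Nat.centralBinom (k+1) : ℝ)
        = 2*(2*(k:ℝ)+1) * (Nat.centralBinom k : ℝ) := by
      exact_mod_cast congrArg (fun m : ℕ => (m : ℝ)) (Nat.succ_mul_centralBinom_succ k)
    apply mul_left_cancel₀ hk1
    rw [h, ih]
    rw [pow_succ]
    linear_combination ((-(1/4):ℝ))^k * (1/4) * hcbR

lemma myChoose_neg_one (k : ℕ) : Ring.choose (-1 : ℝ) k = (-1)^k := by
  induction k with
  | zero => simp [Ring.choose_zero_right]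
  | succ k ih =>
    have h := myRingChoose_succ (-1 : ℝ) k
    have hk1 : ((k:ℝ)+1) ≠ 0 := by positivity
    apply mul_left_cancel₀ hk1
    rw [h, ih, pow_succ]
    ring

lemma myCentralBinom_conv (n : ℕ) :
    ∑ ij ∈ Finset.HasAntidiagonal.antidiagonal n, ((Nat.centralBinom ij.1 : ℝ) * (Nat.centralBinom ij.2 : ℝ))
      = 4^n := by
  have h := Ring.add_choose_eq (R := ℝ) (r := -(1/2)) (s := -(1/2)) n (Commute.all _ _)
  rw [show (-(1/2) : ℝ) + -(1/2) = -1 by ring, myChoose_neg_one] at h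
  simp only [myChoose_neg_half] at h
  have h2 : ∑ ij ∈ Finset.HasAntidiagonal.antidiagonal n,
      ((-(1/4):ℝ)^ij.1 * (Nat.centralBinom ij.1 : ℝ) * ((-(1/4):ℝ)^ij.2 * (Nat.centralBinom ij.2 : ℝ)))
      = (-(1/4):ℝ)^n * ∑ ij ∈ Finset.HasAntidiagonal.antidiagonal n,
          ((Nat.centralBinom ij.1 : ℝ) * (Nat.centralBinom ij.2 : ℝ)) := by
    rw [Finset.mul_sum]
    apply Finset.sum_congr rfl
    intro ij hij
    rw [Finset.HasAntidiagonal.mem_antidiagonal] at hij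
    rw [← hij, pow_add]
    ring
  rw [h2] at h
  have h4 : ((-(1/4):ℝ))^n ≠ 0 := by
    apply pow_ne_zero; norm_num
  field_simp at h ⊢
  calc ∑ ij ∈ Finset.HasAntidiagonal.antidiagonal n, ((Nat.centralBinom ij.1 : ℝ) * (Nat.centralBinom ij.2 : ℝ))
      = ((-1:ℝ))^n / ((-(1/4):ℝ))^n := by
        field_simp
        linarith [h]
    _ = 4^n := by
        rw [div_eq_iff h4, ← mul_pow]
        norm_num

lemma mySummable_cb {x : ℝ} (hx0 : 0 ≤ x) (hx : 4*x < 1) :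
    Summable (fun n : ℕ => (Nat.centralBinom n : ℝ) * x^n) := by
  apply Summable.of_nonneg_of_le (fun n => by positivity) (fun n => ?_)
    (summable_geometric_of_lt_one (by positivity) hx)
  calc (Nat.centralBinom n : ℝ) * x^n ≤ (4:ℝ)^n * x^n := by
        apply mul_le_mul_of_nonneg_right _ (by positivity)
        exact_mod_cast Nat.cast_le.mpr (myCentralBinom_le_four_pow n)
    _ = (4*x)^n := by rw [mul_pow]

lemma myCatalan_le_cb (n : ℕ) : catalan n ≤ Nat.centralBinom n := by
  calc catalan n ≤ (n+1) * catalan n := Nat.le_mul_of_pos_left _ n.succ_pos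
  _ = Nat.centralBinom n := succ_mul_catalan_eq_centralBinom n

lemma mySummable_cat {x : ℝ} (hx0 : 0 ≤ x) (hx : 4*x < 1) :
    Summable (fun n : ℕ => (catalan n : ℝ) * x^n) := by
  apply Summable.of_nonneg_of_le (fun n => by positivity) (fun n => ?_) (mySummable_cb hx0 hx)
  apply mul_le_mul_of_nonneg_right _ (by positivity)
  exact_mod_cast Nat.cast_le.mpr (myCatalan_le_cb n)

lemma myTsum_cb {x s : ℝ} (hx0 : 0 ≤ x) (hs : 0 < s) (hsq : s^2 = 1 - 4*x) :
    ∑' n : ℕ, (Nat.centralBinom n : ℝ) * x^n = 1/s := by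
  have hx4 : 4*x < 1 := by nlinarith
  set f : ℕ → ℝ := fun n => (Nat.centralBinom n : ℝ) * x^n with hf
  have hsum : Summable f := mySummable_cb hx0 hx4
  have hnorm : Summable (fun n => ‖f n‖) := by
    apply hsum.congr
    intro n
    rw [Real.norm_of_nonneg (by positivity)]
  have hC := tsum_mul_tsum_eq_tsum_sum_antidiagonal_of_summable_norm hnorm hnorm
  have hinner : ∀ n : ℕ, ∑ kl ∈ Finset.HasAntidiagonal.antidiagonal n, f kl.1 * f kl.2 = (4*x)^n := by
    intro n
    have : ∀ kl ∈ Finset.HasAntidiagonal.antidiagonal n, f kl.1 * f kl.2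
        = ((Nat.centralBinom kl.1 : ℝ) * (Nat.centralBinom kl.2 : ℝ)) * x^n := by
      intro kl hkl
      rw [Finset.HasAntidiagonal.mem_antidiagonal] at hkl
      simp only [hf]
      rw [← hkl, pow_add]
      ring
    rw [Finset.sum_congr rfl this, ← Finset.sum_mul, myCentralBinom_conv, mul_pow]
  rw [funext hinner] at hC
  rw [tsum_geometric_of_lt_one (by positivity) hx4] at hC
  -- hC : (∑' f) * (∑' f) = (1 - 4x)⁻¹
  have hG0 : 0 ≤ ∑' n, f n := tsum_nonneg (fun n => by positivity)
  have hkey : ((∑' n, f n) - 1/s) * ((∑' n, f n) + 1/s) = 0 := by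
    have h2 : (1 - 4*x)⁻¹ = 1/s^2 := by rw [hsq, one_div]
    rw [h2] at hC
    have expand : ((∑' n, f n) - 1/s) * ((∑' n, f n) + 1/s)
        = (∑' n, f n) * (∑' n, f n) - (1/s) * (1/s) := by ring
    rw [expand, hC]
    ring
  rcases mul_eq_zero.mp hkey with h | h
  · linarith
  · exfalso
    have h1s : 0 < 1/s := by positivity
    nlinarith

noncomputable def catGF (y : ℝ) : ℝ := ∑' n : ℕ, (catalan n : ℝ) * y^n

lemma catGF_quadratic {y : ℝ} (hy0 : 0 ≤ y) (hy : 4*y < 1) :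
    catGF y = 1 + y * (catGF y)^2 := by
  set f : ℕ → ℝ := fun n => (catalan n : ℝ) * y^n with hf
  have hsum : Summable f := mySummable_cat hy0 hy
  have hnorm : Summable (fun n => ‖f n‖) := by
    apply hsum.congr
    intro n
    rw [Real.norm_of_nonneg (by positivity)]
  have hC := tsum_mul_tsum_eq_tsum_sum_antidiagonal_of_summable_norm hnorm hnorm
  have hinner : ∀ n : ℕ, ∑ kl ∈ Finset.HasAntidiagonal.antidiagonal n, f kl.1 * f kl.2
      = (catalan (n+1) : ℝ) * y^n := by
    intro n
    have h1 : ∀ kl ∈ Finset.HasAntidiagonal.antidiagonal n, f kl.1 * f kl.2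
        = ((catalan kl.1 : ℝ) * (catalan kl.2 : ℝ)) * y^n := by
      intro kl hkl
      rw [Finset.HasAntidiagonal.mem_antidiagonal] at hkl
      simp only [hf]
      rw [← hkl, pow_add]
      ring
    rw [Finset.sum_congr rfl h1, ← Finset.sum_mul]
    congr 1
    rw [catalan_succ' n]
    push_cast
    rfl
  rw [funext hinner] at hC
  -- hC : catGF y * catGF y = ∑' n, catalan (n+1) * y^n
  have htail : ∑' n : ℕ, f n = f 0 + ∑' n : ℕ, f (n+1) := Summable.tsum_eq_zero_add hsum
  have hf0 : f 0 = 1 := by simp [hf]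
  have hshift : y * ∑' n : ℕ, (catalan (n+1) : ℝ) * y^n = ∑' n : ℕ, f (n+1) := by
    rw [← tsum_mul_left]
    apply tsum_congr
    intro n
    simp only [hf]
    rw [pow_succ]
    ring
  have hGF : y * (catGF y * catGF y) = catGF y - 1 := by
    have hcat : catGF y = ∑' n : ℕ, f n := rfl
    rw [hcat, hC, hshift, htail, hf0]
    ring
  rw [pow_two (catGF y), hGF]
  ring

lemma catGF_continuousOn {b : ℝ} (hb0 : 0 ≤ b) (hb : 4*b < 1) :
    ContinuousOn catGF (Set.Icc 0 b) := by
  rw [continuousOn_iff_continuous_restrict]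
  have h4b : (0:ℝ) ≤ 4*b := by positivity
  apply continuous_tsum
    (f := fun (n : ℕ) (z : Set.Icc (0:ℝ) b) => (catalan n : ℝ) * (z:ℝ)^n)
    (u := fun n => (4*b)^n)
  · intro i
    exact continuous_const.mul ((continuous_subtype_val).pow i)
  · exact summable_geometric_of_lt_one h4b hb
  · intro n z
    obtain ⟨hz0, hzb⟩ := z.2
    rw [Real.norm_of_nonneg (by positivity)]
    calc (catalan n : ℝ) * (z:ℝ)^n ≤ (4:ℝ)^n * b^n := by
          apply mul_le_mul _ (pow_le_pow_left₀ hz0 hzb n) (by positivity) (by positivity)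
          calc (catalan n : ℝ) ≤ (Nat.centralBinom n : ℝ) := by
                exact_mod_cast Nat.cast_le.mpr (myCatalan_le_cb n)
            _ ≤ (4:ℝ)^n := by exact_mod_cast Nat.cast_le.mpr (myCentralBinom_le_four_pow n)
      _ = (4*b)^n := by rw [mul_pow]

lemma catGF_val {x s : ℝ} (hx0 : 0 < x) (hs : 0 < s) (hsq : s^2 = 1 - 4*x) :
    2 * x * catGF x - 1 = -s := by
  have hx4 : 4*x < 1 := by nlinarith
  set φ : ℝ → ℝ := fun y => 2*y*catGF y - 1 with hφ
  have hφsq : ∀ y ∈ Set.Icc (0:ℝ) x, (φ y)^2 = 1 - 4*y := by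
    intro y hy
    obtain ⟨hy0, hyx⟩ := hy
    have hy4 : 4*y < 1 := by linarith
    have hq := catGF_quadratic hy0 hy4
    simp only [hφ]
    nlinarith [hq]
  have hφ0 : φ 0 = -1 := by simp [hφ]
  have hφcont : ContinuousOn φ (Set.Icc 0 x) := by
    apply ContinuousOn.sub _ continuousOn_const
    exact (continuousOn_const.mul continuousOn_id).mul (catGF_continuousOn hx0.le hx4)
  have hφx : φ x < 0 := by
    by_contra hge
    push_neg at hge
    have h0mem : (0:ℝ) ∈ Set.Icc (φ 0) (φ x) := by
      rw [hφ0]; exact ⟨by norm_num, hge⟩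
    obtain ⟨y, hy, hy0⟩ := intermediate_value_Icc hx0.le hφcont h0mem
    have := hφsq y hy
    rw [hy0] at this
    obtain ⟨_, hyx⟩ := hy
    nlinarith
  have hx_mem : x ∈ Set.Icc (0:ℝ) x := ⟨hx0.le, le_rfl⟩
  have hsx := hφsq x hx_mem
  rw [← hsq] at hsx
  have : (φ x - (-s)) * (φ x + (-s)) = 0 := by nlinarith
  rcases mul_eq_zero.mp this with h | h
  · exact sub_eq_zero.mp h
  · exfalso; nlinarith

theorem catalan_distribution_mean (p q : ℝ) (hp : 0 < p) (hplt : p < 1 / 2)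
    (hq : q = 1 - p) :
    ∑' n : ℕ, (n : ℝ) * (q * (p * q) ^ n * (catalan n : ℝ)) = p / (q - p) := by
  have hq0 : 0 < q := by rw [hq]; linarith
  have hs : 0 < q - p := by rw [hq]; linarith
  have hx0 : 0 < p*q := mul_pos hp hq0
  have hsq : (q-p)^2 = 1 - 4*(p*q) := by rw [hq]; ring
  have hx4 : 4*(p*q) < 1 := by nlinarith
  have hG := myTsum_cb hx0.le hs hsq
  have hφ := catGF_val hx0 hs hsq
  have hF : catGF (p*q) = 1/q := by
    have h3 : q * catGF (p*q) = 1 := by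
      apply mul_left_cancel₀ (ne_of_gt (by positivity : (0:ℝ) < 2*p))
      have h2 : 2*(p*q)*catGF (p*q) = 2*p := by rw [hq] at hφ ⊢; linarith
      linear_combination h2
    exact eq_one_div_of_mul_eq_one_left (by linear_combination h3)
  have hterm : ∀ n : ℕ, (n:ℝ) * (q * (p*q)^n * (catalan n : ℝ))
      = q * ((Nat.centralBinom n : ℝ) * (p*q)^n) - q * ((catalan n : ℝ) * (p*q)^n) := by
    intro n
    have hc : ((n:ℝ)+1) * (catalan n : ℝ) = (Nat.centralBinom n : ℝ) := by
      exact_mod_cast congrArg (fun m : ℕ => (m:ℝ)) (succ_mul_catalan_eq_centralBinom n)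
    linear_combination q * (p*q)^n * hc
  rw [tsum_congr hterm]
  have hscb : Summable (fun n : ℕ => q * ((Nat.centralBinom n : ℝ) * (p*q)^n)) :=
    (mySummable_cb hx0.le hx4).mul_left q
  have hscat : Summable (fun n : ℕ => q * ((catalan n : ℝ) * (p*q)^n)) :=
    (mySummable_cat hx0.le hx4).mul_left q
  rw [Summable.tsum_sub hscb hscat, tsum_mul_left, tsum_mul_left, hG]
  have hdefs : catGF (p*q) = ∑' n : ℕ, (catalan n : ℝ) * (p*q)^n := rfl
  rw [← hdefs, hF]
  have hsne : q - p ≠ 0 := ne_of_gt hs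
  have hqne : q ≠ 0 := ne_of_gt hq0
  field_simp
  ring
end

section
/- Closed-form power series identity: ∑_{m≥1} binom(2m-k, m+1)·x^{m-1} = (1/(x²√(1-4x)))·((1 - √(1-4x))/2)^{k+2} for 0 < x < 1/4 and integer k ≥ 1 (the sum running over m ≥ k). -/
lemma my_choose_le (n k : ℕ) : n.choose k ≤ 2 ^ n := by
  rcases le_or_gt k n with h | h
  · calc n.choose k ≤ ∑ m ∈ Finset.range (n+1), n.choose m :=
        Finset.single_le_sum (fun i _ => Nat.zero_le _) (Finset.mem_range.mpr (by omega))
    _ = 2 ^ n := Nat.sum_range_choose n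
  · simp [Nat.choose_eq_zero_of_lt h]

lemma catalan_le_four_pow (n : ℕ) : catalan n ≤ 4 ^ n := by
  have h1 : catalan n ≤ (n+1) * catalan n := Nat.le_mul_of_pos_left _ (by omega)
  rw [succ_mul_catalan_eq_centralBinom] at h1
  calc catalan n ≤ n.centralBinom := h1
  _ ≤ 2 ^ (2*n) := my_choose_le _ _
  _ = 4 ^ n := by rw [pow_mul]; norm_num

lemma f_summable (a : ℕ) {x : ℝ} (hx0 : 0 ≤ x) (hx : x < 1/4) :
    Summable (fun j : ℕ => (Nat.choose (2*j+a) j : ℝ) * x ^ j) := by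
  apply Summable.of_nonneg_of_le (fun j => by positivity) (fun j => ?_)
    (((summable_geometric_of_lt_one (by linarith) (by linarith : (4:ℝ)*x < 1)).mul_left ((2:ℝ)^a)))
  calc (Nat.choose (2*j+a) j : ℝ) * x ^ j ≤ (2:ℝ)^(2*j+a) * x ^ j := by
        gcongr
        exact_mod_cast my_choose_le (2*j+a) j
  _ = 2^a * (4*x)^j := by rw [pow_add, pow_mul, mul_pow]; norm_num; ring

lemma cat_summable {x : ℝ} (hx0 : 0 ≤ x) (hx : x < 1/4) :
    Summable (fun n : ℕ => (catalan n : ℝ) * x ^ n) := by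
  apply Summable.of_nonneg_of_le (fun j => by positivity) (fun j => ?_)
    (summable_geometric_of_lt_one (by linarith) (by linarith : (4:ℝ)*x < 1))
  calc (catalan j : ℝ) * x ^ j ≤ (4:ℝ)^j * x ^ j := by
        gcongr; exact_mod_cast catalan_le_four_pow j
  _ = (4*x)^j := (mul_pow _ _ _).symm

lemma cat_partial (N : ℕ) :
    ∑ n ∈ Finset.range N, (catalan n : ℝ) / 4^(n+1) = (1 - Nat.centralBinom N / 4^N)/2 := by
  induction N with
  | zero => simp [Nat.centralBinom_zero]
  | succ N ih =>
    rw [Finset.sum_range_succ, ih]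
    have h1 : ((N:ℝ) + 1) * Nat.centralBinom (N+1) = 2 * (2*N+1) * Nat.centralBinom N := by
      exact_mod_cast Nat.succ_mul_centralBinom_succ N
    have h2 : ((N:ℝ) + 1) * catalan N = Nat.centralBinom N := by
      exact_mod_cast succ_mul_catalan_eq_centralBinom N
    have hN : ((N:ℝ) + 1) ≠ 0 := by positivity
    have h4 : (4:ℝ)^N ≠ 0 := by positivity
    have key0 : 2*(catalan N:ℝ) = 4*Nat.centralBinom N - Nat.centralBinom (N+1) := by
      have h3 : ((N:ℝ)+1) * (2*(catalan N:ℝ)) =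
          ((N:ℝ)+1)*(4*Nat.centralBinom N - Nat.centralBinom (N+1)) := by
        linear_combination 2*h2 + h1
      exact mul_left_cancel₀ hN h3
    rw [pow_succ]
    field_simp
    linear_combination key0

lemma cat_gf {x : ℝ} (hx0 : 0 < x) (hx : x < 1/4) :
    2*x*(∑' n, (catalan n:ℝ)*x^n) = 1 - Real.sqrt (1-4*x) := by
  have hx0' : (0:ℝ) ≤ x := hx0.le
  have hsum := cat_summable hx0' hx
  set c := ∑' n, (catalan n:ℝ)*x^n with hc
  have hnorm : Summable (fun n : ℕ => ‖(catalan n : ℝ) * x ^ n‖) := by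
    simpa [Real.norm_eq_abs, abs_of_nonneg, abs_of_nonneg hx0', abs_of_nonneg (pow_nonneg hx0' _)] using hsum
  have hcc : c * c = ∑' n : ℕ, (catalan (n+1) : ℝ) * x ^ n := by
    rw [hc, tsum_mul_tsum_eq_tsum_sum_antidiagonal_of_summable_norm hnorm hnorm]
    refine tsum_congr fun n => ?_
    rw [catalan_succ']
    push_cast
    rw [Finset.sum_mul]
    refine Finset.sum_congr rfl fun kl hkl => ?_
    have h := Finset.HasAntidiagonal.mem_antidiagonal.mp hkl
    rw [← h, pow_add]; ring
  have hshift : c = 1 + ∑' n : ℕ, (catalan (n+1) : ℝ) * x ^ (n+1) := by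
    rw [hc, Summable.tsum_eq_zero_add hsum]; simp
  have hsq : x * (c*c) = c - 1 := by
    rw [hcc, ← tsum_mul_left]
    conv_rhs => rw [hshift]
    rw [add_sub_cancel_left]
    refine tsum_congr fun n => ?_
    ring
  have hxc : x * c = ∑' n : ℕ, (catalan n : ℝ) * x ^ (n+1) := by
    rw [hc, ← tsum_mul_left]
    refine tsum_congr fun n => ?_
    ring
  have hle : x * c ≤ 1/2 := by
    rw [hxc]
    apply Real.tsum_le_of_sum_range_le (fun n => by positivity)
    intro N
    calc ∑ n ∈ Finset.range N, (catalan n : ℝ) * x ^ (n+1)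
        ≤ ∑ n ∈ Finset.range N, (catalan n : ℝ) / 4^(n+1) := by
          refine Finset.sum_le_sum fun n _ => ?_
          have hxle : x ^ (n+1) ≤ (1/4:ℝ)^(n+1) := pow_le_pow_left₀ hx0' (by linarith) _
          have hcat : (0:ℝ) ≤ (catalan n:ℝ) := by positivity
          calc (catalan n:ℝ) * x^(n+1) ≤ (catalan n:ℝ) * (1/4:ℝ)^(n+1) :=
                mul_le_mul_of_nonneg_left hxle hcat
          _ = (catalan n:ℝ)/4^(n+1) := by rw [div_pow]; ring
    _ = (1 - Nat.centralBinom N / 4^N)/2 := cat_partial N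
    _ ≤ 1/2 := by
        have : (0:ℝ) ≤ Nat.centralBinom N / 4^N := by positivity
        linarith
  have hsqr : (1 - 2*x*c)^2 = 1-4*x := by linear_combination (4*x) * hsq
  rw [← hsqr, Real.sqrt_sq (by linarith)]
  ring

lemma central_split (n : ℕ) : ((2*n).choose n : ℝ) = (2*n).choose (n+1) + catalan n := by
  have h1 : ((2*n).choose (n+1) : ℝ) * (n+1) = (2*n).choose n * n := by
    have h := Nat.choose_succ_right_eq (2*n) n
    rw [show 2*n - n = n from by omega] at h
    exact_mod_cast h
  have h2 : ((n:ℝ)+1) * catalan n = (2*n).choose n := by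
    have h := succ_mul_catalan_eq_centralBinom n
    rw [Nat.centralBinom_eq_two_mul_choose] at h
    exact_mod_cast h
  have hN : ((n:ℝ)+1) ≠ 0 := by positivity
  apply mul_left_cancel₀ hN
  linear_combination -h1 - h2

section
variable {x : ℝ} (hx0 : 0 < x) (hx : x < 1/4)
include hx0 hx

lemma hsum_shift (a : ℕ) :
    Summable (fun j : ℕ => (Nat.choose (2*j+a+2) (j+1) : ℝ) * x^(j+1)) := by
  have h := (summable_nat_add_iff (f := fun j : ℕ => (Nat.choose (2*j+a) j : ℝ) * x ^ j) 1).mpr (f_summable a hx0.le hx)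
  refine h.congr fun j => ?_
  simp only [show 2*(j+1)+a = 2*j+a+2 from by ring]

lemma hsum_shift2 (a : ℕ) :
    Summable (fun j : ℕ => (Nat.choose (2*j+a+2) j : ℝ) * x^(j+1)) := by
  have h := (f_summable (a+2) hx0.le hx).mul_left x
  refine h.congr fun j => ?_
  simp only [show 2*j+(a+2) = 2*j+a+2 from by ring]
  ring

lemma hF_shift (a : ℕ) :
    ∑' j : ℕ, (Nat.choose (2*j+a) j : ℝ) * x ^ j
      = 1 + ∑' j : ℕ, (Nat.choose (2*j+a+2) (j+1) : ℝ) * x^(j+1) := by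
  rw [Summable.tsum_eq_zero_add (f_summable a hx0.le hx)]
  congr 1
  · simp
  · refine tsum_congr fun j => ?_
    simp only [show 2*(j+1)+a = 2*j+a+2 from by ring]

lemma hFrec (a : ℕ) :
    ∑' j : ℕ, (Nat.choose (2*j+(a+1)) j : ℝ) * x ^ j
      = (∑' j : ℕ, (Nat.choose (2*j+a) j : ℝ) * x ^ j)
        + x * ∑' j : ℕ, (Nat.choose (2*j+(a+2)) j : ℝ) * x ^ j := by
  rw [hF_shift hx0 hx (a+1), hF_shift hx0 hx a]
  have hx2 : x * ∑' j : ℕ, (Nat.choose (2*j+(a+2)) j : ℝ) * x ^ j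
      = ∑' j : ℕ, (Nat.choose (2*j+a+2) j : ℝ) * x^(j+1) := by
    rw [← tsum_mul_left]
    refine tsum_congr fun j => ?_
    simp only [show 2*j+(a+2) = 2*j+a+2 from by ring]
    ring
  rw [hx2, add_assoc, ← Summable.tsum_add (hsum_shift hx0 hx a) (hsum_shift2 hx0 hx a)]
  congr 1
  refine tsum_congr fun j => ?_
  have h : (2*j+a+2+1).choose (j+1) = (2*j+a+2).choose j + (2*j+a+2).choose (j+1) :=
    Nat.choose_succ_succ _ _
  rw [show 2*j+(a+1)+2 = 2*j+a+2+1 from by ring, h]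
  push_cast
  ring

/-- `F a * (x^a * s) = ((1-s)/2)^a`. -/
lemma key_identity (a : ℕ) :
    (∑' j : ℕ, (Nat.choose (2*j+a) j : ℝ) * x ^ j) * (x^a * Real.sqrt (1-4*x))
      = ((1 - Real.sqrt (1-4*x))/2)^a := by
  have hx4 : (0:ℝ) < 1 - 4*x := by linarith
  set s := Real.sqrt (1-4*x) with hsdef
  have hs0 : 0 < s := Real.sqrt_pos.mpr hx4
  have hs2 : s^2 = 1 - 4*x := Real.sq_sqrt hx4.le
  set c := ∑' n, (catalan n:ℝ)*x^n with hc
  have hcgf : 2*x*c = 1 - s := cat_gf hx0 hx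
  -- (i) : F 0 = 1 + 2x F 1
  have hi : (∑' j : ℕ, (Nat.choose (2*j+0) j : ℝ) * x ^ j)
      = 1 + 2*x*(∑' j : ℕ, (Nat.choose (2*j+1) j : ℝ) * x ^ j) := by
    have h0 := hF_shift hx0 hx 0
    have h1 : 2*x*(∑' j : ℕ, (Nat.choose (2*j+1) j : ℝ) * x ^ j)
        = ∑' j : ℕ, (2 * Nat.choose (2*j+1) j : ℝ) * x^(j+1) := by
      rw [← tsum_mul_left]
      refine tsum_congr fun j => ?_
      push_cast; ring
    rw [h0, h1]
    congr 1
    refine tsum_congr fun j => ?_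
    have hsymm : (2*j+1).choose (j+1) = (2*j+1).choose j := by
      rw [← Nat.choose_symm (show j+1 ≤ 2*j+1 by omega)]
      congr 1
      omega
    have hps : (2*j+0+2).choose (j+1) = (2*j+1).choose j + (2*j+1).choose (j+1) := by
      rw [show 2*j+0+2 = 2*j+1+1 from by ring]
      exact Nat.choose_succ_succ _ _
    rw [hps, hsymm]
    push_cast; ring
  -- (iii) : x * F 2 = F 0 - c
  have hiii : x * (∑' j : ℕ, (Nat.choose (2*j+(0+2)) j : ℝ) * x ^ j)
      = (∑' j : ℕ, (Nat.choose (2*j+0) j : ℝ) * x ^ j) - c := by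
    have hcshift : c = 1 + ∑' n : ℕ, (catalan (n+1) : ℝ) * x ^ (n+1) := by
      rw [hc, Summable.tsum_eq_zero_add (cat_summable hx0.le hx)]; simp
    have hcs : Summable (fun n : ℕ => (catalan (n+1) : ℝ) * x ^ (n+1)) :=
      (summable_nat_add_iff (f := fun n : ℕ => (catalan n : ℝ) * x ^ n) 1).mpr (cat_summable hx0.le hx)
    have h0 := hF_shift hx0 hx 0
    have hx2 : x * (∑' j : ℕ, (Nat.choose (2*j+(0+2)) j : ℝ) * x ^ j)
        = ∑' j : ℕ, (Nat.choose (2*j+0+2) j : ℝ) * x^(j+1) := by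
      rw [← tsum_mul_left]
      refine tsum_congr fun j => ?_
      simp only [show 2*j+(0+2) = 2*j+0+2 from by ring]
      ring
    rw [hx2, h0, hcshift]
    rw [show (1 + ∑' j : ℕ, (Nat.choose (2*j+0+2) (j+1) : ℝ) * x^(j+1))
        - (1 + ∑' n : ℕ, (catalan (n+1) : ℝ) * x ^ (n+1))
        = (∑' j : ℕ, (Nat.choose (2*j+0+2) (j+1) : ℝ) * x^(j+1))
          - ∑' n : ℕ, (catalan (n+1) : ℝ) * x ^ (n+1) from by ring]
    rw [← Summable.tsum_sub (hsum_shift hx0 hx 0) hcs]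
    refine tsum_congr fun j => ?_
    have hsplit : ((2*(j+1)).choose (j+1) : ℝ) = (2*(j+1)).choose (j+2) + catalan (j+1) :=
      central_split (j+1)
    have hsymm : (2*(j+1)).choose (j+2) = (2*(j+1)).choose j := by
      rw [← Nat.choose_symm (show j+2 ≤ 2*(j+1) by omega)]
      congr 1
      omega
    rw [show 2*j+0+2 = 2*(j+1) from by ring]
    rw [hsymm] at hsplit
    rw [hsplit]
    push_cast; ring
  -- recurrence at 0 : F 1 = F 0 + x F 2
  have hii := hFrec hx0 hx 0
  -- F 1 = 2 F 0 - c
  have hF1c : (∑' j : ℕ, (Nat.choose (2*j+(0+1)) j : ℝ) * x ^ j)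
      = 2 * (∑' j : ℕ, (Nat.choose (2*j+0) j : ℝ) * x ^ j) - c := by
    rw [hii, hiii]; ring
  -- base values
  have hF0 : (∑' j : ℕ, (Nat.choose (2*j+0) j : ℝ) * x ^ j) * s = 1 := by
    have h2 : (∑' j : ℕ, (Nat.choose (2*j+0) j : ℝ) * x ^ j) * (1 - 4*x) = s := by
      have hi' := hi
      rw [show (0:ℕ)+1 = 1 from rfl] at hF1c
      rw [hF1c] at hi'
      linear_combination hi' - hcgf
    have h3 : ((∑' j : ℕ, (Nat.choose (2*j+0) j : ℝ) * x ^ j) * s - 1) * s = 0 := by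
      linear_combination h2 + (∑' j : ℕ, (Nat.choose (2*j+0) j : ℝ) * x ^ j) * hs2 - hs2 * 0
    rcases mul_eq_zero.mp h3 with h | h
    · linarith
    · exact absurd h (ne_of_gt hs0)
  have hF1 : (∑' j : ℕ, (Nat.choose (2*j+1) j : ℝ) * x ^ j) * (x^1 * s) = (1 - s)/2 := by
    rw [show (0:ℕ)+1 = 1 from rfl] at hF1c
    rw [hF1c]
    have e : (2 * (∑' j : ℕ, (Nat.choose (2*j+0) j : ℝ) * x ^ j) - c) * (x^1 * s)
        = 2*x*((∑' j : ℕ, (Nat.choose (2*j+0) j : ℝ) * x ^ j) * s) - s*(2*x*c)/2 := by ring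
    rw [e, hF0, hcgf]
    linear_combination (1/2 : ℝ) * hs2
  -- main induction
  have hy : (1-s)/2 = x + ((1-s)/2)^2 := by linear_combination (-1/4 : ℝ) * hs2
  have main : ∀ a : ℕ,
      (∑' j : ℕ, (Nat.choose (2*j+a) j : ℝ) * x ^ j) * (x^a * s) = ((1-s)/2)^a ∧
      (∑' j : ℕ, (Nat.choose (2*j+(a+1)) j : ℝ) * x ^ j) * (x^(a+1) * s) = ((1-s)/2)^(a+1) := by
    intro a
    induction a with
    | zero =>
      refine ⟨?_, ?_⟩
      · simpa using hF0
      · simpa using hF1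
    | succ a ih =>
      obtain ⟨ih1, ih2⟩ := ih
      refine ⟨ih2, ?_⟩
      have hrec := hFrec hx0 hx (a+1)
      have hrec' := hFrec hx0 hx a
      -- x * F (a+2) = F (a+1) - F a
      have hF2 : x * (∑' j : ℕ, (Nat.choose (2*j+(a+2)) j : ℝ) * x ^ j)
          = (∑' j : ℕ, (Nat.choose (2*j+(a+1)) j : ℝ) * x ^ j)
            - (∑' j : ℕ, (Nat.choose (2*j+a) j : ℝ) * x ^ j) := by
        linarith [hrec']
      have expand : (∑' j : ℕ, (Nat.choose (2*j+(a+1+1)) j : ℝ) * x ^ j) * (x^(a+1+1) * s)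
          = (x * (∑' j : ℕ, (Nat.choose (2*j+(a+2)) j : ℝ) * x ^ j)) * (x^(a+1) * s) := by
        rw [show a+1+1 = a+2 from rfl]
        ring
      rw [expand, hF2]
      have e : ((∑' j : ℕ, (Nat.choose (2*j+(a+1)) j : ℝ) * x ^ j)
            - (∑' j : ℕ, (Nat.choose (2*j+a) j : ℝ) * x ^ j)) * (x^(a+1) * s)
          = (∑' j : ℕ, (Nat.choose (2*j+(a+1)) j : ℝ) * x ^ j) * (x^(a+1)*s)
            - x * ((∑' j : ℕ, (Nat.choose (2*j+a) j : ℝ) * x ^ j) * (x^a * s)) := by ring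
      rw [e, ih2, ih1]
      linear_combination (((1-s)/2)^a) * hy
  exact (main a).1

end

theorem catalan_series_identity_one (k : ℕ) (hk : 1 ≤ k) (x : ℝ) (hx0 : 0 < x)
    (hx : x < 1 / 4) :
    ∑' i : ℕ, (Nat.choose (2 * (i + k) - k) (i + k + 1) : ℝ) * x ^ (i + k - 1) =
      1 / (x ^ 2 * Real.sqrt (1 - 4 * x)) *
        ((1 - Real.sqrt (1 - 4 * x)) / 2) ^ (k + 2) := by
  have hx4 : (0:ℝ) < 1 - 4*x := by linarith
  have hkey := key_identity hx0 hx (k+2)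
  set s := Real.sqrt (1 - 4*x) with hsdef
  have hs0 : 0 < s := Real.sqrt_pos.mpr hx4
  have hsumF : Summable (fun j : ℕ => (Nat.choose (2*j+(k+2)) j : ℝ) * x ^ j) :=
    f_summable (k+2) hx0.le hx
  have hhs : HasSum (fun j : ℕ => (Nat.choose (2*j+(k+2)) j : ℝ) * x ^ j)
      (∑' j : ℕ, (Nat.choose (2*j+(k+2)) j : ℝ) * x ^ j) := hsumF.hasSum
  set F := ∑' j : ℕ, (Nat.choose (2*j+(k+2)) j : ℝ) * x ^ j with hF
  have hhs2 : HasSum (fun j : ℕ => (Nat.choose (2*j+(k+2)) j : ℝ) * x ^ (j+k)) (x^k * F) := by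
    have h := hhs.mul_left (x^k)
    have e : (fun j : ℕ => (Nat.choose (2*j+(k+2)) j : ℝ) * x ^ (j+k))
        = fun j : ℕ => x^k * ((Nat.choose (2*j+(k+2)) j : ℝ) * x^j) := by
      funext j; rw [pow_add]; ring
    rw [e]; exact h
  have hg : (fun n : ℕ => (Nat.choose (2*(n+1+k)-k) (n+1+k+1) : ℝ) * x ^ (n+1+k-1))
      = fun j : ℕ => (Nat.choose (2*j+(k+2)) j : ℝ) * x ^ (j+k) := by
    funext j
    have e1 : 2*(j+1+k)-k = 2*j+(k+2) := by omega
    have e2 : j+1+k+1 = j+k+2 := by omega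
    have e3 : j+1+k-1 = j+k := by omega
    rw [e1, e2, e3]
    have hsymm : (2*j+(k+2)).choose (j+k+2) = (2*j+(k+2)).choose j := by
      rw [← Nat.choose_symm (show j+k+2 ≤ 2*j+(k+2) by omega)]
      congr 1
      omega
    rw [hsymm]
  have hgoal : HasSum (fun i : ℕ => (Nat.choose (2*(i+k)-k) (i+k+1) : ℝ) * x ^ (i+k-1))
      (x^k*F) := by
    have h := hhs2
    rw [← hg] at h
    have h' := (hasSum_nat_add_iff (f := fun i : ℕ =>
      (Nat.choose (2*(i+k)-k) (i+k+1) : ℝ) * x ^ (i+k-1)) 1).mp h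
    have h0 : ((2*k-k).choose (k+1) : ℝ) * x ^ (k-1) = 0 := by
      rw [Nat.choose_eq_zero_of_lt (show 2*k-k < k+1 by omega)]
      simp
    simpa [h0] using h'
  rw [hgoal.tsum_eq]
  have hxs : x^2*s ≠ 0 := by positivity
  have e : x^k*F = (F * (x^(k+2)*s)) / (x^2*s) := by
    rw [eq_div_iff hxs]; ring
  rw [e, hkey]
  ring
end
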